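/- arXiv:1810.12103 — 3 statements merged into one kernel-verified Lean document; each statement's English description precedes it below -/
import Mathlib

section
/- For every integer k, every z ∈ ℂ and every z̲ ∈ ℤ, the lens theta functions satisfy θ_τ(z+2kr, z̲) = θ_τ(z, z̲), θ_σ(z+2kr, z̲) = θ_σ(z, z̲), θ_τ(z, z̲+kr) = θ_τ(z, z̲), and θ_σ(z, z̲+kr) = θ_σ(z, z̲). -/
open Complex

noncomputable section

/-- `π` as a complex number. -/
def cπ : ℂ := Real.pi

/-- The infinite q-Pochhammer symbol `(w;q)_∞ = ∏_{j=0}^∞ (1 - w q^j)`. -/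
def pochinf (w q : ℂ) : ℂ := ∏' j : ℕ, (1 - w * q ^ j)

/-- The theta function `θ(w|q) = (w;q)_∞ (q w⁻¹;q)_∞`. -/
def jtheta (w q : ℂ) : ℂ := pochinf w q * pochinf (q * w⁻¹) q

/-- `e^{2πi x}`. -/
def e2pi (x : ℂ) : ℂ := Complex.exp (2 * cπ * Complex.I * x)

/-- Normalisation `φ_τ` for the lens theta function `θ_τ`. -/
def phiTau (r : ℕ) (σ τ z zb : ℂ) : ℂ :=
  cπ * Complex.I / (6 * (r : ℂ)) *
    (3 * ((r : ℂ) + 1 - 2 * zb) * (2 * z + 1) - ((r : ℂ) ^ 2 - 1) * (σ - τ - 1) -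
      6 * zb * ((r : ℂ) - zb) * (τ + 1))

/-- Normalisation `φ_σ` for the lens theta function `θ_σ`. -/
def phiSigma (r : ℕ) (σ τ z zb : ℂ) : ℂ :=
  -(cπ * Complex.I / (6 * (r : ℂ))) *
    (3 * ((r : ℂ) - 1 - 2 * zb) * (2 * z - 1) - ((r : ℂ) ^ 2 - 1) * (σ - τ - 1) +
      6 * zb * ((r : ℂ) - zb) * (σ - 1))

/-- The lens theta function `θ_τ(z,z̲)`. -/
def thetaTau (r : ℕ) (σ τ z zb : ℂ) : ℂ :=
  Complex.exp (phiTau r σ τ z zb) * jtheta (e2pi (-z) * e2pi (τ * zb)) (e2pi (τ * (r : ℂ)))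

/-- The lens theta function `θ_σ(z,z̲)`. -/
def thetaSigma (r : ℕ) (σ τ z zb : ℂ) : ℂ :=
  Complex.exp (phiSigma r σ τ z zb) * jtheta (e2pi z * e2pi (σ * zb)) (e2pi (σ * (r : ℂ)))

/-- The infinite-product factor `γ_σ(z,z̲)` of the lens elliptic gamma function. -/
def gammaSigmaF (r : ℕ) (σ τ z zb : ℂ) : ℂ :=
  ∏' p : ℕ × ℕ,
    (1 - e2pi (-z) * e2pi (-(σ * zb)) * e2pi ((σ + τ) * ((p.1 : ℂ) + 1)) *
        e2pi (σ * (r : ℂ) * ((p.2 : ℂ) + 1))) /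
    (1 - e2pi z * e2pi (σ * zb) * e2pi ((σ + τ) * (p.1 : ℂ)) * e2pi (σ * (r : ℂ) * (p.2 : ℂ)))

/-- The infinite-product factor `γ_τ(z,z̲)` of the lens elliptic gamma function. -/
def gammaTauF (r : ℕ) (σ τ z zb : ℂ) : ℂ :=
  ∏' p : ℕ × ℕ,
    (1 - e2pi (-z) * e2pi (-(τ * ((r : ℂ) - zb))) * e2pi ((σ + τ) * ((p.1 : ℂ) + 1)) *
        e2pi (τ * (r : ℂ) * ((p.2 : ℂ) + 1))) /
    (1 - e2pi z * e2pi (τ * ((r : ℂ) - zb)) * e2pi ((σ + τ) * (p.1 : ℂ)) *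
        e2pi (τ * (r : ℂ) * (p.2 : ℂ)))

/-- Normalisation `φ_e` of the lens elliptic gamma function. -/
def phiE (r : ℕ) (σ τ z zb : ℂ) : ℂ :=
  cπ * Complex.I *
    (zb * (zb - (r : ℂ)) * (6 * z - 3 * σ - 3 * τ + (1 - σ + τ) * ((r : ℂ) - 2 * zb))) /
    (6 * (r : ℂ))

/-- The lens elliptic gamma function `Γ(z,z̲)`. -/
def lensGamma (r : ℕ) (σ τ z zb : ℂ) : ℂ :=
  Complex.exp (phiE r σ τ z zb) * gammaSigmaF r σ τ z zb * gammaTauF r σ τ z zb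

/-- The triple infinite product `g_σ(z,z̲;σ,τ,ω)`. -/
def gS (r : ℕ) (σ τ ω z zb : ℂ) : ℂ :=
  ∏' k : ℕ × ℕ × ℕ,
    (1 - e2pi z * e2pi (σ * zb) * e2pi (σ * (r : ℂ) * (k.1 : ℂ)) *
        e2pi ((σ + τ) * (k.2.1 : ℂ)) * e2pi ((σ + ω) * (k.2.2 : ℂ)))

/-- The triple infinite product `g_τ(z,z̲;σ,τ,ω)`. -/
def gT (r : ℕ) (σ τ ω z zb : ℂ) : ℂ :=
  ∏' k : ℕ × ℕ × ℕ,
    (1 - e2pi z * e2pi (τ * ((r : ℂ) - zb)) * e2pi (τ * (r : ℂ) * (k.1 : ℂ)) *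
        e2pi ((σ + τ) * (k.2.1 : ℂ)) * e2pi (ω * (k.2.2 : ℂ)))

/-- `γ⁺_σ(z,z̲;σ,τ,ω)`. -/
def gammaPlusSigma (r : ℕ) (σ τ ω z zb : ℂ) : ℂ :=
  gS r σ τ ω z zb * gS r σ τ ω (σ + τ + ω - z) ((r : ℂ) + 1 - zb)

/-- `γ⁺_τ(z,z̲;σ,τ,ω)`. -/
def gammaPlusTau (r : ℕ) (σ τ ω z zb : ℂ) : ℂ :=
  gT r σ τ ω z zb * gT r σ τ ω (σ + τ + ω - z) ((r : ℂ) - zb)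

/-- The multiple Bernoulli polynomial `B_{3,3}(z;ω₁,ω₂,ω₃)`. -/
def B33 (z w1 w2 w3 : ℂ) : ℂ :=
  z ^ 3 / (w1 * w2 * w3) - 3 * z ^ 2 * (w1 + w2 + w3) / (2 * (w1 * w2 * w3)) +
    z * ((w1 ^ 2 + w2 ^ 2 + w3 ^ 2) + 3 * (w1 * w2 + w1 * w3 + w2 * w3)) /
      (2 * (w1 * w2 * w3)) -
    (w1 + w2 + w3) * (w1 * w2 + w1 * w3 + w2 * w3) / (4 * (w1 * w2 * w3))

/-- The multiple Bernoulli polynomial `B_{4,4}(z;ω₁,ω₂,ω₃,ω₄)`. -/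
def B44 (z w1 w2 w3 w4 : ℂ) : ℂ :=
  z ^ 4 / (w1 * w2 * w3 * w4) -
    2 * z ^ 3 * (w1 + w2 + w3 + w4) / (w1 * w2 * w3 * w4) +
    z ^ 2 * ((w1 ^ 2 + w2 ^ 2 + w3 ^ 2 + w4 ^ 2) +
        3 * (w1 * w2 + w1 * w3 + w1 * w4 + w2 * w3 + w2 * w4 + w3 * w4)) /
      (w1 * w2 * w3 * w4) -
    z * (w1 + w2 + w3 + w4) *
        (w1 * w2 + w1 * w3 + w1 * w4 + w2 * w3 + w2 * w4 + w3 * w4) /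
      (w1 * w2 * w3 * w4) -
    ((w1 ^ 4 + w2 ^ 4 + w3 ^ 4 + w4 ^ 4) -
        5 * ((w1 * w2) ^ 2 + (w1 * w3) ^ 2 + (w1 * w4) ^ 2 + (w2 * w3) ^ 2 + (w2 * w4) ^ 2 +
            (w3 * w4) ^ 2) -
        15 * (w1 ^ 2 * (w2 * w3 + w2 * w4 + w3 * w4) + w2 ^ 2 * (w1 * w3 + w1 * w4 + w3 * w4) +
            w3 ^ 2 * (w1 * w2 + w1 * w4 + w2 * w4) + w4 ^ 2 * (w1 * w2 + w1 * w3 + w2 * w3)) -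
        45 * (w1 * w2 * w3 * w4)) /
      (30 * (w1 * w2 * w3 * w4))

/-- `S(z;σ,τ,ω) = (B_{4,4}(z;σ,τ,−1,ω) + B_{4,4}(z−1;σ,τ,−1,ω))/48`. -/
def Sfun (z a b c : ℂ) : ℂ := (B44 z a b (-1) c + B44 (z - 1) a b (-1) c) / 48

/-- `S₂(z,z̲;σ,τ,ω)`. -/
def S2 (r : ℕ) (σ τ ω z zb : ℂ) : ℂ :=
  Sfun (z + zb * σ) ((r : ℂ) * σ) (σ + τ) (ω + σ) +
    Sfun (z + ((r : ℂ) - zb) * τ) ((r : ℂ) * τ) (σ + τ) (ω - τ)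

/-- `T₂(z,z̲;σ,τ,ω)`. -/
def T2 (r : ℕ) (σ τ ω z zb : ℂ) : ℂ :=
  Sfun (z + zb * σ) ((r : ℂ) * σ) (σ + τ) ω +
    Sfun (z + ((r : ℂ) - zb) * τ) ((r : ℂ) * τ) (σ + τ) ω

/-- Normalisation `φ⁺(z,z̲;σ,τ,ω)` of the lens triple gamma function. -/
def phiPlus (r : ℕ) (σ τ ω z zb : ℂ) : ℂ :=
  2 * cπ * Complex.I *
    (T2 r (σ - 1 / 2) (τ + 1 / 2) ω z 0 - S2 r (σ - 1 / 2) (τ + 1 / 2) ω z zb)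

/-- The lens triple gamma function `Γ⁺_σ(z,z̲;σ,τ,ω)`. -/
def GammaPlusSigma (r : ℕ) (σ τ ω z zb : ℂ) : ℂ :=
  Complex.exp (phiPlus r σ τ ω z zb) * gammaPlusSigma r σ τ ω z zb

/-- The lens triple gamma function `Γ⁺_{στ}(z,z̲;σ,τ,ω,μ)`. -/
def GammaPlusSigmaTau (r : ℕ) (σ τ ω μ z zb : ℂ) : ℂ :=
  GammaPlusSigma r σ τ ω z zb * gammaPlusTau r σ τ μ z zb

/-- The prefactor `λ(σ,τ)`. -/
def lam (r : ℕ) (σ τ : ℂ) : ℂ :=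
  pochinf (e2pi ((r : ℂ) * σ)) (e2pi ((r : ℂ) * σ)) *
    pochinf (e2pi ((r : ℂ) * τ)) (e2pi ((r : ℂ) * τ))

/-- The shifted discrete summation variable `z̃`. -/
def zt (r : ℕ) (xb : Fin 8 → ℚ) (zb : ℕ) : ℚ :=
  (zb : ℚ) + ((r : ℚ) + (((r + 1) % 2 : ℕ) : ℚ)) * Int.fract (xb 1)

/-- The elliptic hypergeometric sum/integral `I(x,x̲)`. -/
def Ihyp (r : ℕ) (σ τ : ℂ) (x : Fin 8 → ℂ) (xb : Fin 8 → ℚ) : ℂ :=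
  lam r σ τ / 2 *
    ∑ zb ∈ Finset.range r, ∫ z in (0:ℝ)..(1:ℝ),
      (∏ j : Fin 8,
          lensGamma r σ τ (x j + (z : ℂ)) ((xb j + zt r xb zb : ℚ) : ℂ) *
            lensGamma r σ τ (x j - (z : ℂ)) ((xb j - zt r xb zb : ℚ) : ℂ)) /
      (lensGamma r σ τ (2 * (z : ℂ)) ((2 * zt r xb zb : ℚ) : ℂ) *
        lensGamma r σ τ (-(2 * (z : ℂ))) ((-(2 * zt r xb zb) : ℚ) : ℂ))

/-- The shifted theta product `θ_σ(x,x̲)_k = ∏_{j=0}^{k−1} θ_σ(x+jτ, x̲+j)`. -/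
def thetaK (r : ℕ) (σ τ x xb : ℂ) (k : ℕ) : ℂ :=
  ∏ j ∈ Finset.range k, thetaSigma r σ τ (x + (j : ℂ) * τ) (xb + (j : ℂ))

end

lemma e2pi_add (x y : ℂ) : e2pi (x + y) = e2pi x * e2pi y := by
  rw [e2pi, e2pi, e2pi, ← Complex.exp_add]; ring_nf

lemma e2pi_ne_zero (x : ℂ) : e2pi x ≠ 0 := Complex.exp_ne_zero _

lemma e2pi_int (n : ℤ) : e2pi (n : ℂ) = 1 := by
  rw [e2pi, ← Complex.exp_int_mul_two_pi_mul_I n, cπ]; ring_nf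

lemma e2pi_zpow (x : ℂ) (n : ℤ) : e2pi ((n : ℂ) * x) = e2pi x ^ n := by
  rw [e2pi, e2pi, ← Complex.exp_int_mul]; ring_nf

lemma norm_e2pi_lt_one {x : ℂ} (hx : 0 < x.im) : ‖e2pi x‖ < 1 := by
  rw [e2pi, Complex.norm_exp]
  have : (2 * cπ * Complex.I * x).re = -(2 * Real.pi * x.im) := by
    simp [cπ, Complex.mul_re, Complex.mul_im]
  rw [this, Real.exp_lt_one_iff]
  have := Real.pi_pos
  nlinarith

lemma norm_exp2pi_lt_one {x : ℂ} (hx : 0 < x.im) :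
    ‖Complex.exp (2 * cπ * Complex.I * x)‖ < 1 := norm_e2pi_lt_one hx

lemma multipliable_one_sub (w : ℂ) {q : ℂ} (hq : ‖q‖ < 1) :
    Multipliable (fun j : ℕ => 1 - w * q ^ j) := by
  by_cases hz : ∃ j0 : ℕ, 1 - w * q ^ j0 = 0
  · obtain ⟨j0, h0⟩ := hz
    refine ⟨0, ?_⟩
    rw [HasProd]
    refine tendsto_const_nhds.congr' ?_
    filter_upwards [Filter.eventually_ge_atTop {j0}] with s hs
    exact (Finset.prod_eq_zero (hs (Finset.mem_singleton_self j0)) h0).symm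
  · push_neg at hz
    have hg : Summable (fun j : ℕ => ‖w‖ * ‖q‖ ^ j) :=
      (summable_geometric_of_lt_one (norm_nonneg q) hq).mul_left _
    have hlog : Summable (fun j : ℕ => Complex.log (1 - w * q ^ j)) := by
      apply Summable.of_norm_bounded_eventually_nat (g := fun j => 3/2 * (‖w‖ * ‖q‖ ^ j))
        (hg.mul_left _)
      have h0 : Filter.Tendsto (fun j : ℕ => ‖w‖ * ‖q‖ ^ j) Filter.atTop (nhds 0) := by
        simpa using (tendsto_pow_atTop_nhds_zero_of_norm_lt_one
          (by simpa using hq)).const_mul ‖w‖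
      filter_upwards [h0.eventually_le_const (by norm_num : (0:ℝ) < 1/2)] with j hj
      have hn : ‖-(w * q ^ j)‖ ≤ 1/2 := by
        rw [norm_neg, norm_mul, norm_pow]; exact hj
      calc ‖Complex.log (1 - w * q ^ j)‖ = ‖Complex.log (1 + -(w * q ^ j))‖ := by
            rw [sub_eq_add_neg]
        _ ≤ 3/2 * ‖-(w * q ^ j)‖ := Complex.norm_log_one_add_half_le_self hn
        _ = 3/2 * (‖w‖ * ‖q‖ ^ j) := by rw [norm_neg, norm_mul, norm_pow]
    exact Complex.multipliable_of_summable_log hlog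


lemma pochinf_shift (w : ℂ) {q : ℂ} (hq : ‖q‖ < 1) :
    pochinf w q = (1 - w) * pochinf (q * w) q := by
  have hshift : ∀ j : ℕ, 1 - w * q ^ (j + 1) = 1 - q * w * q ^ j := by
    intro j; rw [pow_succ]; ring
  have hm : Multipliable (fun j : ℕ => 1 - w * q ^ (j + 1)) :=
    (multipliable_one_sub (q * w) hq).congr (fun j => (hshift j).symm)
  have key := tprod_eq_zero_mul' (M := ℂ) (f := fun j : ℕ => 1 - w * q ^ j) hm
  rw [pochinf, key]
  simp only [pow_zero, mul_one]
  rw [pochinf]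
  exact congrArg _ (tprod_congr hshift)

lemma jtheta_step {w q : ℂ} (hq : ‖q‖ < 1) (hq0 : q ≠ 0) (hw : w ≠ 0) :
    jtheta (q * w) q = -w⁻¹ * jtheta w q := by
  have h1 : q * (q * w)⁻¹ = w⁻¹ := by field_simp
  rw [jtheta, jtheta, h1, pochinf_shift w hq, pochinf_shift w⁻¹ hq]
  have h2 : (1 - w⁻¹) = -w⁻¹ * (1 - w) := by field_simp; ring
  rw [h2]; ring

lemma neg_inv_exp (u : ℂ) : -(Complex.exp u)⁻¹ = Complex.exp (cπ * Complex.I - u) := by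
  rw [sub_eq_add_neg, Complex.exp_add, Complex.exp_neg, cπ, Complex.exp_pi_mul_I]
  ring

lemma jtheta_exp_step (a b : ℂ) (hb : ‖Complex.exp b‖ < 1) :
    jtheta (Complex.exp (b + a)) (Complex.exp b) =
      Complex.exp (cπ * Complex.I - a) * jtheta (Complex.exp a) (Complex.exp b) := by
  rw [Complex.exp_add, jtheta_step hb (Complex.exp_ne_zero b) (Complex.exp_ne_zero a),
    neg_inv_exp]

lemma jtheta_exp_zpow (a b : ℂ) (hb : ‖Complex.exp b‖ < 1) (k m : ℤ)
    (hm : 2 * m = k * (k - 1)) :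
    jtheta (Complex.exp ((k : ℂ) * b + a)) (Complex.exp b) =
      Complex.exp ((k : ℂ) * (cπ * Complex.I) - (k : ℂ) * a - (m : ℂ) * b) *
        jtheta (Complex.exp a) (Complex.exp b) := by
  have main : ∀ k : ℤ, ∃ m : ℤ, 2 * m = k * (k - 1) ∧
      jtheta (Complex.exp ((k : ℂ) * b + a)) (Complex.exp b) =
        Complex.exp ((k : ℂ) * (cπ * Complex.I) - (k : ℂ) * a - (m : ℂ) * b) *
          jtheta (Complex.exp a) (Complex.exp b) := by
    intro k
    induction k using Int.induction_on with
    | zero => exact ⟨0, by ring, by norm_num⟩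
    | succ i ih =>
      obtain ⟨m, hm, he⟩ := ih
      refine ⟨m + i, by push_cast; linear_combination hm, ?_⟩
      push_cast at he ⊢
      have h1 : ((i : ℂ) + 1) * b + a = b + ((i : ℂ) * b + a) := by ring
      rw [h1, jtheta_exp_step _ _ hb, he, ← mul_assoc, ← Complex.exp_add]
      congr 2
      ring
    | pred i ih =>
      obtain ⟨m, hm, he⟩ := ih
      refine ⟨m + i + 1, by push_cast; linear_combination hm, ?_⟩
      have h1 : ((-(i : ℤ) : ℤ) : ℂ) * b + a = b + (((-(i : ℤ) - 1 : ℤ) : ℂ) * b + a) := by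
        push_cast; ring
      rw [h1, jtheta_exp_step _ _ hb] at he
      have h2 := congrArg (fun t => Complex.exp (-(cπ * Complex.I -
        (((-(i : ℤ) - 1 : ℤ) : ℂ) * b + a))) * t) he
      simp only [← mul_assoc, ← Complex.exp_add, neg_add_cancel, Complex.exp_zero,
        one_mul] at h2
      rw [h2]
      congr 2
      push_cast
      ring
  obtain ⟨m', hm', he⟩ := main k
  have : m = m' := by omega
  rw [this]; exact he

/-- periodicity of the lens theta functions. -/
theorem lens_theta_periodicity (r : ℕ) (hr : 0 < r) (σ τ : ℂ)
    (hσ : 0 < σ.im) (hτ : 0 < τ.im) (k : ℤ) (z : ℂ) (zb : ℤ) :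
    thetaTau r σ τ (z + 2 * (k : ℂ) * (r : ℂ)) (zb : ℂ) = thetaTau r σ τ z (zb : ℂ) ∧
    thetaSigma r σ τ (z + 2 * (k : ℂ) * (r : ℂ)) (zb : ℂ) = thetaSigma r σ τ z (zb : ℂ) ∧
    thetaTau r σ τ z ((zb : ℂ) + (k : ℂ) * (r : ℂ)) = thetaTau r σ τ z (zb : ℂ) ∧
    thetaSigma r σ τ z ((zb : ℂ) + (k : ℂ) * (r : ℂ)) = thetaSigma r σ τ z (zb : ℂ) := by
  have hrR : (0:ℝ) < (r:ℝ) := by exact_mod_cast hr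
  have hrC : ((r:ℕ):ℂ) ≠ 0 := Nat.cast_ne_zero.mpr hr.ne'
  have himτ : (0:ℝ) < (τ * (r:ℂ)).im := by
    rw [Complex.mul_im]
    simp only [Complex.natCast_re, Complex.natCast_im, mul_zero, zero_add, add_zero]
    exact mul_pos hτ hrR
  have himσ : (0:ℝ) < (σ * (r:ℂ)).im := by
    rw [Complex.mul_im]
    simp only [Complex.natCast_re, Complex.natCast_im, mul_zero, zero_add, add_zero]
    exact mul_pos hσ hrR
  have hbτ : ‖Complex.exp (2 * cπ * Complex.I * (τ * (r:ℂ)))‖ < 1 := norm_exp2pi_lt_one himτ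
  have hbσ : ‖Complex.exp (2 * cπ * Complex.I * (σ * (r:ℂ)))‖ < 1 := norm_exp2pi_lt_one himσ
  obtain ⟨t, ht⟩ := Int.even_mul_succ_self (k - 1)
  have hm : 2 * t = k * (k - 1) := by linear_combination -ht
  have hm' : (t:ℂ) = (k:ℂ) * ((k:ℂ) - 1) / 2 := by
    have hmC : (2:ℂ) * (t:ℂ) = (k:ℂ) * ((k:ℂ) - 1) := by exact_mod_cast hm
    linear_combination hmC / 2
  refine ⟨?_, ?_, ?_, ?_⟩
  · -- thetaTau, z-shift
    unfold thetaTau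
    have harg : e2pi (-(z + 2 * (k:ℂ) * (r:ℂ))) = e2pi (-z) := by
      have h : (-(z + 2 * (k:ℂ) * (r:ℂ))) = -z + ((-(2 * k * (r:ℤ)) : ℤ) : ℂ) := by
        push_cast; ring
      rw [h, e2pi_add, e2pi_int, mul_one]
    rw [harg]
    congr 1
    rw [Complex.exp_eq_exp_iff_exists_int]
    refine ⟨k * ((r:ℤ) + 1) - 2 * k * zb, ?_⟩
    unfold phiTau cπ
    push_cast
    field_simp
    ring
  · -- thetaSigma, z-shift
    unfold thetaSigma
    have harg : e2pi (z + 2 * (k:ℂ) * (r:ℂ)) = e2pi z := by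
      have h : (z + 2 * (k:ℂ) * (r:ℂ)) = z + ((2 * k * (r:ℤ) : ℤ) : ℂ) := by
        push_cast; ring
      rw [h, e2pi_add, e2pi_int, mul_one]
    rw [harg]
    congr 1
    rw [Complex.exp_eq_exp_iff_exists_int]
    refine ⟨2 * k * zb - k * ((r:ℤ) - 1), ?_⟩
    unfold phiSigma cπ
    push_cast
    field_simp
    ring
  · -- thetaTau, zb-shift
    unfold thetaTau e2pi
    have harg1 : Complex.exp (2 * cπ * Complex.I * (-z)) *
        Complex.exp (2 * cπ * Complex.I * (τ * ((zb:ℂ) + (k:ℂ) * (r:ℂ)))) =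
        Complex.exp ((k:ℂ) * (2 * cπ * Complex.I * (τ * (r:ℂ))) +
          (2 * cπ * Complex.I * (-z) + 2 * cπ * Complex.I * (τ * (zb:ℂ)))) := by
      rw [← Complex.exp_add]; congr 1; ring
    have harg2 : Complex.exp (2 * cπ * Complex.I * (-z)) *
        Complex.exp (2 * cπ * Complex.I * (τ * (zb:ℂ))) =
        Complex.exp (2 * cπ * Complex.I * (-z) + 2 * cπ * Complex.I * (τ * (zb:ℂ))) :=
      (Complex.exp_add _ _).symm
    rw [harg1, harg2, jtheta_exp_zpow _ _ hbτ k t hm, ← mul_assoc, ← Complex.exp_add]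
    congr 1
    rw [Complex.exp_eq_exp_iff_exists_int]
    refine ⟨t * (r:ℤ) + k * zb, ?_⟩
    unfold phiTau cπ
    push_cast
    rw [hm']
    field_simp
    ring
  · -- thetaSigma, zb-shift
    unfold thetaSigma e2pi
    have harg1 : Complex.exp (2 * cπ * Complex.I * z) *
        Complex.exp (2 * cπ * Complex.I * (σ * ((zb:ℂ) + (k:ℂ) * (r:ℂ)))) =
        Complex.exp ((k:ℂ) * (2 * cπ * Complex.I * (σ * (r:ℂ))) +
          (2 * cπ * Complex.I * z + 2 * cπ * Complex.I * (σ * (zb:ℂ)))) := by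
      rw [← Complex.exp_add]; congr 1; ring
    have harg2 : Complex.exp (2 * cπ * Complex.I * z) *
        Complex.exp (2 * cπ * Complex.I * (σ * (zb:ℂ))) =
        Complex.exp (2 * cπ * Complex.I * z + 2 * cπ * Complex.I * (σ * (zb:ℂ))) :=
      (Complex.exp_add _ _).symm
    rw [harg1, harg2, jtheta_exp_zpow _ _ hbσ k t hm, ← mul_assoc, ← Complex.exp_add]
    congr 1
    rw [Complex.exp_eq_exp_iff_exists_int]
    refine ⟨-(t * (r:ℤ) + k * zb), ?_⟩
    unfold phiSigma cπ
    push_cast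
    rw [hm']
    field_simp
    ring
end

section
/- For every integer n, every z ∈ ℂ and every z̲ ∈ ℤ, the lens theta functions satisfy the recurrence relations θ_τ(z+nτ, z̲+n) = θ_τ(z, z̲)·e^{−(nπi/r)(2z+(n−1)τ+r−2z̲−n+1)} and θ_σ(z+nσ, z̲−n) = θ_σ(z, z̲)·e^{−(nπi/r)(2z+(n−1)σ+r−2z̲+n−1)}. -/
open Complex

/-- recurrence relations for the lens theta functions. -/
theorem lens_theta_recurrence (r : ℕ) (hr : 0 < r) (σ τ : ℂ)
    (hσ : 0 < σ.im) (hτ : 0 < τ.im) (n : ℤ) (z : ℂ) (zb : ℤ) :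
    thetaTau r σ τ (z + (n : ℂ) * τ) ((zb : ℂ) + (n : ℂ)) =
      thetaTau r σ τ z (zb : ℂ) *
        Complex.exp (-((n : ℂ) * cπ * Complex.I / (r : ℂ)) *
          (2 * z + ((n : ℂ) - 1) * τ + (r : ℂ) - 2 * (zb : ℂ) - (n : ℂ) + 1)) ∧
    thetaSigma r σ τ (z + (n : ℂ) * σ) ((zb : ℂ) - (n : ℂ)) =
      thetaSigma r σ τ z (zb : ℂ) *
        Complex.exp (-((n : ℂ) * cπ * Complex.I / (r : ℂ)) *
          (2 * z + ((n : ℂ) - 1) * σ + (r : ℂ) - 2 * (zb : ℂ) + (n : ℂ) - 1)) := by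
  have hr0 : (r : ℂ) ≠ 0 := Nat.cast_ne_zero.mpr hr.ne'
  constructor
  · have harg : e2pi (-(z + (n : ℂ) * τ)) * e2pi (τ * ((zb : ℂ) + (n : ℂ))) =
        e2pi (-z) * e2pi (τ * (zb : ℂ)) := by
      unfold e2pi
      rw [← Complex.exp_add, ← Complex.exp_add]
      ring_nf
    unfold thetaTau
    rw [harg, mul_comm (Complex.exp (phiTau r σ τ z (zb : ℂ)) * _), ← mul_assoc,
      ← Complex.exp_add]
    congr 2
    unfold phiTau
    field_simp
    ring
  · have harg : e2pi (z + (n : ℂ) * σ) * e2pi (σ * ((zb : ℂ) - (n : ℂ))) =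
        e2pi z * e2pi (σ * (zb : ℂ)) := by
      unfold e2pi
      rw [← Complex.exp_add, ← Complex.exp_add]
      ring_nf
    unfold thetaSigma
    rw [harg, mul_comm (Complex.exp (phiSigma r σ τ z (zb : ℂ)) * _), ← mul_assoc,
      ← Complex.exp_add]
    congr 2
    unfold phiSigma
    field_simp
    ring
end

section
/- For every z ∈ ℂ and every z̲ ∈ ℤ, the lens triple gamma function Γ⁺_σ satisfies the inversion relation Γ⁺_σ(σ+τ+ω−z, r+1−z̲; σ,τ,ω) = Γ⁺_σ(z, z̲; σ,τ,ω). -/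
open Complex

lemma sfun_symm (x a b c : ℂ) : Sfun (a + b + c - x) a b c = Sfun x a b c := by
  unfold Sfun B44; ring

lemma sfun_shift_indep (x a a' b c : ℂ) (ha : a ≠ 0) (ha' : a' ≠ 0) (hb : b ≠ 0) (hc : c ≠ 0) :
    Sfun (x + a) a b c - Sfun x a b c = Sfun (x + a') a' b c - Sfun x a' b c := by
  unfold Sfun B44
  have h1 : a ^ 2 * a⁻¹ ^ 2 = 1 := by rw [← mul_pow, mul_inv_cancel₀ ha, one_pow]
  have h2 : a' ^ 2 * a'⁻¹ ^ 2 = 1 := by rw [← mul_pow, mul_inv_cancel₀ ha', one_pow]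
  field_simp
  ring

lemma ne_zero_of_im_pos {w : ℂ} (h : 0 < w.im) : w ≠ 0 := by
  intro h0; rw [h0] at h; simp at h

/-- inversion relation for the lens triple gamma function `Γ⁺_σ`. -/
theorem lens_triple_gamma_inversion (r : ℕ) (hr : 0 < r) (σ τ ω : ℂ)
    (hσ : 0 < σ.im) (hτ : 0 < τ.im) (hω : 0 < ω.im) (z : ℂ) (zb : ℤ) :
    GammaPlusSigma r σ τ ω (σ + τ + ω - z) ((r : ℂ) + 1 - (zb : ℂ)) =
      GammaPlusSigma r σ τ ω z (zb : ℂ) := by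
  have hA : (r : ℂ) * (σ - 1 / 2) ≠ 0 :=
    mul_ne_zero (Nat.cast_ne_zero.mpr hr.ne') (ne_zero_of_im_pos (by simpa using hσ))
  have hB : (r : ℂ) * (τ + 1 / 2) ≠ 0 :=
    mul_ne_zero (Nat.cast_ne_zero.mpr hr.ne') (ne_zero_of_im_pos (by simpa using hτ))
  have hb : (σ - 1 / 2) + (τ + 1 / 2) ≠ 0 := by
    refine ne_zero_of_im_pos ?_
    simp only [Complex.add_im, Complex.sub_im]
    have : ((1:ℂ)/2).im = 0 := by norm_num
    rw [this]
    linarith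
  have hω0 : ω ≠ 0 := ne_zero_of_im_pos hω
  have hS2 : S2 r (σ - 1 / 2) (τ + 1 / 2) ω (σ + τ + ω - z) ((r : ℂ) + 1 - (zb : ℂ)) =
      S2 r (σ - 1 / 2) (τ + 1 / 2) ω z (zb : ℂ) := by
    unfold S2
    rw [show (σ + τ + ω - z) + ((r : ℂ) + 1 - (zb : ℂ)) * (σ - 1 / 2) =
          (r : ℂ) * (σ - 1 / 2) + ((σ - 1 / 2) + (τ + 1 / 2)) + (ω + (σ - 1 / 2)) -
            (z + (zb : ℂ) * (σ - 1 / 2)) by ring,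
        show (σ + τ + ω - z) + ((r : ℂ) - ((r : ℂ) + 1 - (zb : ℂ))) * (τ + 1 / 2) =
          (r : ℂ) * (τ + 1 / 2) + ((σ - 1 / 2) + (τ + 1 / 2)) + (ω - (τ + 1 / 2)) -
            (z + ((r : ℂ) - (zb : ℂ)) * (τ + 1 / 2)) by ring,
        sfun_symm, sfun_symm]
  have hT2 : T2 r (σ - 1 / 2) (τ + 1 / 2) ω (σ + τ + ω - z) 0 =
      T2 r (σ - 1 / 2) (τ + 1 / 2) ω z 0 := by
    unfold T2
    rw [show (σ + τ + ω - z) + (0 : ℂ) * (σ - 1 / 2) =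
          (r : ℂ) * (σ - 1 / 2) + ((σ - 1 / 2) + (τ + 1 / 2)) + ω -
            (z + (r : ℂ) * (σ - 1 / 2)) by ring,
        show (σ + τ + ω - z) + ((r : ℂ) - (0 : ℂ)) * (τ + 1 / 2) =
          (r : ℂ) * (τ + 1 / 2) + ((σ - 1 / 2) + (τ + 1 / 2)) + ω - z by ring,
        sfun_symm, sfun_symm,
        show z + (0 : ℂ) * (σ - 1 / 2) = z by ring,
        show z + ((r : ℂ) - (0 : ℂ)) * (τ + 1 / 2) = z + (r : ℂ) * (τ + 1 / 2) by ring]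
    linear_combination sfun_shift_indep z ((r : ℂ) * (σ - 1 / 2)) ((r : ℂ) * (τ + 1 / 2))
      ((σ - 1 / 2) + (τ + 1 / 2)) ω hA hB hb hω0
  have hphi : phiPlus r σ τ ω (σ + τ + ω - z) ((r : ℂ) + 1 - (zb : ℂ)) =
      phiPlus r σ τ ω z (zb : ℂ) := by
    unfold phiPlus; rw [hT2, hS2]
  have hgam : gammaPlusSigma r σ τ ω (σ + τ + ω - z) ((r : ℂ) + 1 - (zb : ℂ)) =
      gammaPlusSigma r σ τ ω z (zb : ℂ) := by
    unfold gammaPlusSigma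
    rw [show σ + τ + ω - (σ + τ + ω - z) = z by ring,
        show (r : ℂ) + 1 - ((r : ℂ) + 1 - (zb : ℂ)) = (zb : ℂ) by ring, mul_comm]
  unfold GammaPlusSigma
  rw [hphi, hgam]
end
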